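/- Let X, B₁, …, B_k be finite nonempty subsets of F_q. Then |B₁ + ⋯ + B_k| ≤ (|X + B₁| ⋯ |X + B_k|) / |X|^{k-1}. -/

import Mathlib

open Pointwise Finset

private lemma piFinset_zero' {ι : Type*} [Fintype ι] [DecidableEq ι] {α : ι → Type*}
    [∀ i, DecidableEq (α i)] [∀ i, AddCommMonoid (α i)] :
    (Fintype.piFinset fun i => (0 : Finset (α i))) = (0 : Finset (∀ i, α i)) := by
  ext f
  simp only [Fintype.mem_piFinset, Finset.mem_zero]
  constructor
  · intro h; funext i; exact h i
  · intro h i; rw [h]; rfl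

private lemma piFinset_sum' {κ : Type*} {ι : Type*} [Fintype ι] [DecidableEq ι] {α : ι → Type*}
    [∀ i, DecidableEq (α i)] [∀ i, AddCommMonoid (α i)] (s : Finset κ)
    (D : κ → ∀ i, Finset (α i)) :
    ∑ j ∈ s, Fintype.piFinset (D j) = Fintype.piFinset (fun i => ∑ j ∈ s, D j i) := by
  classical
  induction s using Finset.cons_induction with
  | empty =>
      simp only [Finset.sum_empty]
      exact (piFinset_zero' (α := α)).symm
  | cons a s ha ih =>
      simp only [Finset.sum_cons, ih, ← Fintype.piFinset_add]

private lemma sum_subset_sum' {κ G : Type*} [AddCommMonoid G] [DecidableEq G] (s : Finset κ)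
    (f g : κ → Finset G) (h : ∀ j ∈ s, f j ⊆ g j) : ∑ j ∈ s, f j ⊆ ∑ j ∈ s, g j := by
  classical
  induction s using Finset.cons_induction with
  | empty => simp
  | cons a s ha ih =>
      simp only [Finset.sum_cons]
      exact Finset.add_subset_add (h a (Finset.mem_cons_self a s))
        (ih fun j hj => h j (Finset.mem_cons_of_mem hj))

/-- Weak (arithmetic-mean) Plünnecke–Ruzsa for several summands, via the union trick. -/
private lemma weak_pr {G : Type*} [AddCommGroup G] [DecidableEq G] (m : ℕ)
    (C : Fin m → Finset G) (Y : Finset G) (hY : Y.Nonempty) :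
    (∑ j, C j).card * Y.card ^ m ≤ (∑ j, (Y + C j).card) ^ m * Y.card := by
  set U : Finset G := Finset.univ.biUnion C with hU
  have h1 : ∑ j, C j ⊆ m • U := by
    have := sum_subset_sum' (Finset.univ : Finset (Fin m)) C (fun _ => U)
      (fun j _ => Finset.subset_biUnion_of_mem C (mem_univ j))
    simpa using this
  have h2 : (Y + U).card ≤ ∑ j, (Y + C j).card := by
    have hsub : Y + U ⊆ Finset.univ.biUnion (fun j => Y + C j) := by
      intro x hx
      rw [Finset.mem_add] at hx
      obtain ⟨y, hy, u, hu, rfl⟩ := hx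
      rw [hU, Finset.mem_biUnion] at hu
      obtain ⟨j, -, hj⟩ := hu
      exact Finset.mem_biUnion.2 ⟨j, mem_univ j, Finset.add_mem_add hy hj⟩
    exact (Finset.card_le_card hsub).trans (Finset.card_biUnion_le)
  have hb0 : ((Y.card : ℚ≥0)) ≠ 0 := by exact_mod_cast hY.card_pos.ne'
  have h3 : ((m • U).card : ℚ≥0) ≤ ((Y + U).card / Y.card : ℚ≥0) ^ m * Y.card :=
    Finset.pluennecke_ruzsa_inequality_nsmul_add hY U m
  have a1 : (((∑ j, C j).card : ℚ≥0)) ≤ ((m • U).card : ℚ≥0) :=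
    Nat.cast_le.2 (Finset.card_le_card h1)
  have key : (((∑ j, C j).card : ℚ≥0)) * (Y.card : ℚ≥0) ^ m
      ≤ ((∑ j, (Y + C j).card : ℕ) : ℚ≥0) ^ m * (Y.card : ℚ≥0) := by
    calc (((∑ j, C j).card : ℚ≥0)) * (Y.card : ℚ≥0) ^ m
        ≤ ((m • U).card : ℚ≥0) * (Y.card : ℚ≥0) ^ m := mul_le_mul_left a1 _
      _ ≤ (((Y + U).card / Y.card : ℚ≥0) ^ m * Y.card) * (Y.card : ℚ≥0) ^ m :=
          mul_le_mul_left h3 _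
      _ = (((Y + U).card : ℚ≥0) ^ m / (Y.card : ℚ≥0) ^ m * (Y.card : ℚ≥0) ^ m)
            * (Y.card : ℚ≥0) := by rw [div_pow]; ring
      _ = ((Y + U).card : ℚ≥0) ^ m * (Y.card : ℚ≥0) := by
          rw [div_mul_cancel₀ _ (pow_ne_zero m hb0)]
      _ ≤ ((∑ j, (Y + C j).card : ℕ) : ℚ≥0) ^ m * (Y.card : ℚ≥0) :=
          mul_le_mul_left (pow_le_pow_left₀ zero_le (Nat.cast_le.2 h2) m) _
  exact_mod_cast key

/-- Tensor power trick limit lemma. -/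
private lemma le_of_forall_pow_le {u v c : ℕ} (hv : 0 < v)
    (h : ∀ N, 0 < N → u ^ N ≤ c * v ^ N) : u ≤ v := by
  by_contra hlt
  push_neg at hlt
  have hu : v + 1 ≤ u := hlt
  have binom : ∀ N : ℕ, v ^ (N + 1) + (N + 1) * v ^ N ≤ (v + 1) ^ (N + 1) := by
    intro N
    induction N with
    | zero => simp [pow_succ]
    | succ N ih =>
        calc v ^ (N + 2) + (N + 2) * v ^ (N + 1)
            ≤ (v ^ (N + 1) + (N + 1) * v ^ N) * (v + 1) := by ring_nf; nlinarith [pow_pos hv N]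
          _ ≤ (v + 1) ^ (N + 1) * (v + 1) := by gcongr
          _ = (v + 1) ^ (N + 2) := by ring
  -- take N = c * v + 1
  set N := c * v + 1 with hN
  have h1 : (v + 1) ^ N ≤ c * v ^ N := le_trans (Nat.pow_le_pow_left hu N) (h N (by omega))
  have h2 : v ^ N + N * v ^ (N - 1) ≤ c * v ^ N := by
    have := binom (N - 1)
    have hNe : N - 1 + 1 = N := by omega
    rw [hNe] at this
    exact le_trans this h1
  have hv2 : v * v ^ (N - 1) = v ^ N := by
    rw [← pow_succ', Nat.sub_add_cancel (by omega : 1 ≤ N)]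
  have h3 : N * v ^ (N - 1) ≤ c * v * v ^ (N - 1) := by
    calc N * v ^ (N - 1) ≤ v ^ N + N * v ^ (N - 1) := Nat.le_add_left _ _
      _ ≤ c * v ^ N := h2
      _ = c * v * v ^ (N - 1) := by rw [← hv2]; ring
  have h4 : N ≤ c * v := Nat.le_of_mul_le_mul_right h3 (pow_pos hv _)
  omega

theorem sumset_plunnecke_ruzsa {F : Type*} [Field F] [Fintype F] [DecidableEq F]
    (k : ℕ) (hk : 1 ≤ k) (X : Finset F) (B : Fin k → Finset F)
    (hX : X.Nonempty) (hB : ∀ i, (B i).Nonempty) :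
    (∑ i, B i).card * X.card ^ (k - 1) ≤ ∏ i, (X + B i).card := by
  haveI : NeZero k := ⟨by omega⟩
  set P : ℕ := ∏ i, (X + B i).card with hP
  have hPpos : 0 < P := Finset.prod_pos fun i _ => Finset.card_pos.2 (hX.add (hB i))
  set u : ℕ := (∑ i, B i).card * X.card ^ (k - 1) with hu
  -- main estimate for each N
  have main : ∀ N : ℕ, 0 < N → u ^ (N * k) ≤ k ^ k * P ^ (N * k) := by
    intro N hN
    classical
    -- work in the group H
    set H := (Fin N × Fin k) → F with hH
    let Cf : Fin k → Finset H := fun j => Fintype.piFinset fun p => B (p.2 + j)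
    let Y : Finset H := Fintype.piFinset fun _ => X
    have hYne : Y.Nonempty := by
      rw [Fintype.piFinset_nonempty]
      exact fun _ => hX
    -- identify the sum
    have hsum : ∑ j, Cf j = Fintype.piFinset fun _ : Fin N × Fin k => ∑ i, B i := by
      rw [piFinset_sum']
      congr 1
      funext p
      exact Fintype.sum_equiv (Equiv.addLeft p.2) _ _ (fun j => rfl)
    have hsumcard : (∑ j, Cf j).card = (∑ i, B i).card ^ (N * k) := by
      rw [hsum, Fintype.card_piFinset, Finset.prod_const, card_univ, Fintype.card_prod,
        Fintype.card_fin, Fintype.card_fin]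
    have hYcard : Y.card = X.card ^ (N * k) := by
      rw [Fintype.card_piFinset, Finset.prod_const, card_univ, Fintype.card_prod,
        Fintype.card_fin, Fintype.card_fin]
    have hYCcard : ∀ j, (Y + Cf j).card = P ^ N := by
      intro j
      have : Y + Cf j = Fintype.piFinset fun p : Fin N × Fin k => X + B (p.2 + j) := by
        rw [← Fintype.piFinset_add]
      rw [this, Fintype.card_piFinset, Fintype.prod_prod_type]
      have hinner : ∀ t : Fin N, (∏ s : Fin k, (X + B (s + j)).card) = P := by
        intro t
        rw [hP]
        exact Fintype.prod_equiv (Equiv.addRight j) _ _ (fun s => rfl)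
      calc ∏ t : Fin N, ∏ s : Fin k, (X + B ((t, s).2 + j)).card
          = ∏ t : Fin N, P := Finset.prod_congr rfl fun t _ => hinner t
        _ = P ^ N := by rw [Finset.prod_const, card_univ, Fintype.card_fin]
    have hweak := weak_pr k Cf Y hYne
    rw [hsumcard, hYcard] at hweak
    have hrhs : (∑ j : Fin k, (Y + Cf j).card) = k * P ^ N := by
      rw [Finset.sum_congr rfl fun j _ => hYCcard j, Finset.sum_const, card_univ,
        Fintype.card_fin, smul_eq_mul]
    rw [hrhs] at hweak
    -- hweak : (∑B).card ^ (N*k) * (X.card ^ (N*k)) ^ k ≤ (k * P ^ N) ^ k * X.card ^ (N*k)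
    have hXpos : 0 < X.card ^ (N * k) := pow_pos (Finset.card_pos.2 hX) _
    have hkk : (k - 1) * (N * k) + N * k = N * k * k := by
      have h1 : k - 1 + 1 = k := by omega
      calc (k - 1) * (N * k) + N * k = ((k - 1) + 1) * (N * k) := by ring
        _ = N * k * k := by rw [h1]; ring
    have step : u ^ (N * k) * X.card ^ (N * k) ≤ (k ^ k * P ^ (N * k)) * X.card ^ (N * k) := by
      have lhs_eq : u ^ (N * k) * X.card ^ (N * k)
          = (∑ i, B i).card ^ (N * k) * (X.card ^ (N * k)) ^ k := by
        rw [mul_pow, ← pow_mul, ← pow_mul, mul_assoc, ← pow_add, hkk]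
      have rhs_eq : (k * P ^ N) ^ k * X.card ^ (N * k)
          = (k ^ k * P ^ (N * k)) * X.card ^ (N * k) := by
        rw [mul_pow, ← pow_mul]
      rw [lhs_eq, ← rhs_eq]
      exact hweak
    exact Nat.le_of_mul_le_mul_right step hXpos
  -- tensor power trick
  have hfin : u ^ k ≤ P ^ k := by
    apply le_of_forall_pow_le (pow_pos hPpos k) (c := k ^ k)
    intro N hN
    rw [← pow_mul, ← pow_mul, mul_comm k N]
    exact main N hN
  exact (Nat.pow_le_pow_iff_left (by omega : k ≠ 0)).1 hfin
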